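/- The 4×4 matrix A = [[1,2√3,0,0],[−2√3,5,4,0],[0,−4,9,2√3],[0,0,−2√3,13]] satisfies (A−7I)⁴ = 0 and (A−7I)³ ≠ 0, and the 3×3 matrix B = [[3,2√2,0],[−2√2,7,2√2],[0,−2√2,11]] satisfies (B−7I)³ = 0 and (B−7I)² ≠ 0. -/
import Mathlib


open Matrix Real

noncomputable def Aodd : Matrix (Fin 4) (Fin 4) ℝ :=
  !![1, 2 * Real.sqrt 3, 0, 0;
     -(2 * Real.sqrt 3), 5, 4, 0;
     0, -4, 9, 2 * Real.sqrt 3;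
     0, 0, -(2 * Real.sqrt 3), 13]

noncomputable def Beven : Matrix (Fin 3) (Fin 3) ℝ :=
  !![3, 2 * Real.sqrt 2, 0;
     -(2 * Real.sqrt 2), 7, 2 * Real.sqrt 2;
     0, -(2 * Real.sqrt 2), 11]

noncomputable def NA : Matrix (Fin 4) (Fin 4) ℝ :=
  !![-6, 2 * Real.sqrt 3, 0, 0;
     -(2 * Real.sqrt 3), -2, 4, 0;
     0, -4, 2, 2 * Real.sqrt 3;
     0, 0, -(2 * Real.sqrt 3), 6]

noncomputable def MA2 : Matrix (Fin 4) (Fin 4) ℝ :=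
  !![24, -(16 * Real.sqrt 3), 8 * Real.sqrt 3, 0;
     16 * Real.sqrt 3, -24, 0, 8 * Real.sqrt 3;
     8 * Real.sqrt 3, 0, -24, 16 * Real.sqrt 3;
     0, 8 * Real.sqrt 3, -(16 * Real.sqrt 3), 24]

noncomputable def NB : Matrix (Fin 3) (Fin 3) ℝ :=
  !![-4, 2 * Real.sqrt 2, 0;
     -(2 * Real.sqrt 2), 0, 2 * Real.sqrt 2;
     0, -(2 * Real.sqrt 2), 4]

noncomputable def MB2 : Matrix (Fin 3) (Fin 3) ℝ :=
  !![8, -(8 * Real.sqrt 2), 8;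
     8 * Real.sqrt 2, -16, 8 * Real.sqrt 2;
     8, -(8 * Real.sqrt 2), 8]

lemma h3sq : Real.sqrt 3 ^ 2 = 3 := Real.sq_sqrt (by norm_num)
lemma h2sq : Real.sqrt 2 ^ 2 = 2 := Real.sq_sqrt (by norm_num)

lemma hA_eq : Aodd - (7 : ℝ) • 1 = NA := by
  ext i j
  fin_cases i <;> fin_cases j <;>
    simp [Aodd, NA, Matrix.one_apply] <;> norm_num

lemma hA_sq : NA * NA = MA2 := by
  ext i j
  fin_cases i <;> fin_cases j <;>
    simp [NA, MA2, Matrix.mul_apply, Fin.sum_univ_four, Matrix.vecHead, Matrix.vecTail] <;>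
    (try ring_nf) <;> (try simp [h3sq]) <;> (try ring_nf)

lemma hA_four : MA2 * MA2 = 0 := by
  ext i j
  fin_cases i <;> fin_cases j <;>
    simp [MA2, Matrix.mul_apply, Fin.sum_univ_four, Matrix.vecHead, Matrix.vecTail] <;>
    (try ring_nf) <;> (try simp [h3sq]) <;> (try ring_nf)

lemma hB_eq : Beven - (7 : ℝ) • 1 = NB := by
  ext i j
  fin_cases i <;> fin_cases j <;>
    simp [Beven, NB, Matrix.one_apply] <;> norm_num

lemma hB_sq : NB * NB = MB2 := by
  ext i j
  fin_cases i <;> fin_cases j <;>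
    simp [NB, MB2, Matrix.mul_apply, Fin.sum_univ_three, Matrix.vecHead, Matrix.vecTail] <;>
    (try ring_nf) <;> (try simp [h2sq]) <;> (try ring_nf)

lemma hB_three : MB2 * NB = 0 := by
  ext i j
  fin_cases i <;> fin_cases j <;>
    simp [MB2, NB, Matrix.mul_apply, Fin.sum_univ_three, Matrix.vecHead, Matrix.vecTail] <;>
    (try ring_nf) <;> (try simp [h2sq]) <;> (try ring_nf)

theorem stmt_7 :
    (Aodd - (7 : ℝ) • 1) ^ 4 = 0 ∧ (Aodd - (7 : ℝ) • 1) ^ 3 ≠ 0 ∧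
    (Beven - (7 : ℝ) • 1) ^ 3 = 0 ∧ (Beven - (7 : ℝ) • 1) ^ 2 ≠ 0 := by
  rw [hA_eq, hB_eq]
  refine ⟨?_, ?_, ?_, ?_⟩
  · have : NA ^ 4 = (NA * NA) * (NA * NA) := by rw [pow_succ, pow_succ, pow_succ, pow_one, mul_assoc]
    rw [this, hA_sq, hA_four]
  · intro h
    have h3 : NA ^ 3 = MA2 * NA := by
      rw [← hA_sq, pow_succ, sq]
    rw [h3] at h
    have h00 := congrFun (congrFun h 0) 0
    simp [MA2, NA, Matrix.mul_apply, Fin.sum_univ_four, Matrix.vecHead, Matrix.vecTail] at h00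
    nlinarith [h3sq, h00, Real.sqrt_nonneg 3]
  · have : NB ^ 3 = (NB * NB) * NB := by rw [pow_succ, sq]
    rw [this, hB_sq, hB_three]
  · intro h
    rw [sq, hB_sq] at h
    have h00 := congrFun (congrFun h 0) 0
    simp [MB2] at h00
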